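/- If α and α' both lie in an open interval of angles that contains no hinge angle of order at most m² (i.e. no angle β admitting a generating triple (p,q,k) with p²+q² ≤ m² lies between α and α'), then ⌊z e^{iα}⌉ = ⌊z e^{iα'}⌉ for all Gaussian integers z with |z| ≤ m. -/

import Mathlib

open Real Complex

/-- x is a half-integer -/
def IsHalf (x : ℝ) : Prop := ∃ n : ℤ, x = (n : ℝ) + 1 / 2

/-- z has a half-integer real or imaginary part (z ∈ ℋ) -/
def InH (z : ℂ) : Prop := IsHalf z.re ∨ IsHalf z.im

/-- rounding to nearest integer -/
noncomputable def rnd (x : ℝ) : ℤ := ⌊x + 1 / 2⌋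

/-- componentwise rounding of a complex number -/
noncomputable def crnd (z : ℂ) : ℂ := ((rnd z.re : ℤ) : ℂ) + ((rnd z.im : ℤ) : ℂ) * Complex.I

lemma floor_const_of_no_int (a b : ℝ) (hab : a ≤ b) (f : ℝ → ℝ)
    (hf : ContinuousOn f (Set.Icc a b))
    (hno : ∀ x ∈ Set.Icc a b, ∀ n : ℤ, f x ≠ n) : ⌊f a⌋ = ⌊f b⌋ := by
  by_contra hne
  rcases lt_or_gt_of_ne hne with hlt | hlt
  · have h1 : f a < (⌊f b⌋ : ℝ) := by
      have := Int.lt_floor_add_one (f a)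
      have h2 : (⌊f a⌋ : ℝ) + 1 ≤ (⌊f b⌋ : ℝ) := by exact_mod_cast hlt
      linarith
    have h2 : (⌊f b⌋ : ℝ) ≤ f b := Int.floor_le _
    have hmem : (⌊f b⌋ : ℝ) ∈ Set.Icc (f a) (f b) := ⟨le_of_lt h1, h2⟩
    obtain ⟨x, hx, hfx⟩ := intermediate_value_Icc hab hf hmem
    exact hno x hx _ hfx
  · have h1 : f b < (⌊f a⌋ : ℝ) := by
      have := Int.lt_floor_add_one (f b)
      have h2 : (⌊f b⌋ : ℝ) + 1 ≤ (⌊f a⌋ : ℝ) := by exact_mod_cast hlt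
      linarith
    have h2 : (⌊f a⌋ : ℝ) ≤ f a := Int.floor_le _
    have hmem : (⌊f a⌋ : ℝ) ∈ Set.Icc (f b) (f a) := ⟨le_of_lt h1, h2⟩
    obtain ⟨x, hx, hfx⟩ := intermediate_value_Icc' hab hf hmem
    exact hno x hx _ hfx

/-- if no hinge angle of order at most m² lies between α and α',
the discretized rotations of angles α and α' agree on the ball of radius m. -/
theorem rho_constant_between_hinge (m : ℕ) (α α' : ℝ) (hle : α ≤ α')
    (h : ∀ β ∈ Set.Icc α α', ∀ p q : ℤ, p ^ 2 + q ^ 2 ≤ (m : ℤ) ^ 2 →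
      ¬ InH (((p : ℂ) + (q : ℂ) * Complex.I) * Complex.exp (β * Complex.I))) :
    ∀ p q : ℤ, p ^ 2 + q ^ 2 ≤ (m : ℤ) ^ 2 →
      crnd (((p : ℂ) + (q : ℂ) * Complex.I) * Complex.exp (α * Complex.I)) =
        crnd (((p : ℂ) + (q : ℂ) * Complex.I) * Complex.exp (α' * Complex.I)) := by
  intro p q hpq
  set z : ℂ := (p : ℂ) + (q : ℂ) * Complex.I with hz
  have hcont : Continuous fun β : ℝ => z * Complex.exp (β * Complex.I) := by
    continuity
  have hre : ⌊(z * Complex.exp (α * Complex.I)).re + 1/2⌋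
      = ⌊(z * Complex.exp (α' * Complex.I)).re + 1/2⌋ := by
    apply floor_const_of_no_int α α' hle _
      (((Complex.continuous_re.comp hcont).add continuous_const).continuousOn)
    intro x hx n hn
    apply h x hx p q hpq
    left
    exact ⟨n - 1, by simp only [Function.comp_apply, Pi.add_apply, hz] at hn; push_cast; linarith⟩
  have him : ⌊(z * Complex.exp (α * Complex.I)).im + 1/2⌋
      = ⌊(z * Complex.exp (α' * Complex.I)).im + 1/2⌋ := by
    apply floor_const_of_no_int α α' hle _
      (((Complex.continuous_im.comp hcont).add continuous_const).continuousOn)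
    intro x hx n hn
    apply h x hx p q hpq
    right
    exact ⟨n - 1, by simp only [Function.comp_apply, Pi.add_apply, hz] at hn; push_cast; linarith⟩
  simp only [crnd, rnd, hre, him]
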